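/- Let a_1, …, a_9, b_1, …, b_9, c_1, c_2, c_3, d_1, d_2, d_3 be integers with none of the a_i, c_j, d_l divisible by 3. Then there exist integers x_1, …, x_9, y_1, y_2, y_3, with not all x_i divisible by 3, satisfying a_1 x_1^6 + ⋯ + a_9 x_9^6 + 3(c_1 y_1^6 + c_2 y_2^6 + c_3 y_3^6) ≡ 0 (mod 9) and b_1 x_1 + ⋯ + b_9 x_9 + d_1 y_1 + d_2 y_2 + d_3 y_3 ≡ 0 (mod 3). -/

import Mathlib

lemma adjust3 (v0 v1 t : ZMod 3) (h0 : v0 ≠ 0) (h1 : v1 ≠ 0) :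
    ∃ e0 e1 : ZMod 3, e0 ≠ 0 ∧ e1 ≠ 0 ∧ v0 * e0 + v1 * e1 = t := by
  revert h0 h1; revert v0 v1 t; decide

lemma lift3 (e : ZMod 3) (he : e ≠ 0) :
    ∃ y : ℤ, ((y : ZMod 3) = e) ∧ (9 : ℤ) ∣ y ^ 6 - 1 := by
  fin_cases e
  · exact absurd rfl he
  · exact ⟨1, by exact (by decide : ((1:ℤ) : ZMod 3) = 1), by norm_num⟩
  · exact ⟨2, by exact (by decide : ((2:ℤ) : ZMod 3) = 2), by norm_num⟩

lemma pair3 (p q : ZMod 3) (hp : p ≠ 0) (hq : q ≠ 0) (h : p + q ≠ 0) : p = q := by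
  revert hp hq h; revert p q; decide

lemma zerosum (g : ℕ → ℤ) : ∃ j k : ℕ, j < k ∧ k ≤ 9 ∧
    (9 : ℤ) ∣ ∑ i ∈ Finset.Ico j k, g i := by
  have key : ∀ j k : ℕ, j < k → k ≤ 9 →
      ((∑ i ∈ Finset.range j, g i : ℤ) : ZMod 9) = ((∑ i ∈ Finset.range k, g i : ℤ) : ZMod 9) →
      ∃ j k : ℕ, j < k ∧ k ≤ 9 ∧ (9 : ℤ) ∣ ∑ i ∈ Finset.Ico j k, g i := by
    intro j k hlt hle heq
    refine ⟨j, k, hlt, hle, ?_⟩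
    have h0 : ((∑ i ∈ Finset.Ico j k, g i : ℤ) : ZMod 9) = 0 := by
      rw [Finset.sum_Ico_eq_sub _ hlt.le, Int.cast_sub, heq]; ring
    exact_mod_cast (ZMod.intCast_zmod_eq_zero_iff_dvd _ 9).mp h0
  obtain ⟨j, k, hne, heq⟩ := Fintype.exists_ne_map_eq_of_card_lt
    (fun m : Fin 10 => ((∑ i ∈ Finset.range (m : ℕ), g i : ℤ) : ZMod 9)) (by simp)
  rcases lt_trichotomy (j : ℕ) (k : ℕ) with h | h | h
  · exact key j k h (by omega) heq
  · exact absurd (Fin.ext h) hne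
  · exact key k j h (by omega) heq.symm

lemma mainCase (A B c0 c1 c2 d0 d1 d2 : ℤ) (hA : (9:ℤ) ∣ A)
    (hc : (3:ℤ) ∣ c0 + c1 + c2) (hd0 : ((d0 : ZMod 3)) ≠ 0) (hd1 : ((d1 : ZMod 3)) ≠ 0) :
    ∃ y0 y1 : ℤ, ((9:ℤ) ∣ A + 3 * (c0 * y0 ^ 6 + c1 * y1 ^ 6 + c2)) ∧
      ((3:ℤ) ∣ B + (d0 * y0 + d1 * y1 + d2)) := by
  obtain ⟨e0, e1, he0, he1, hadj⟩ :=
    adjust3 (d0 : ZMod 3) (d1 : ZMod 3) (-(B : ZMod 3) - (d2 : ZMod 3)) hd0 hd1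
  obtain ⟨y0, hy0c, hy0d⟩ := lift3 e0 he0
  obtain ⟨y1, hy1c, hy1d⟩ := lift3 e1 he1
  refine ⟨y0, y1, ?_, ?_⟩
  · obtain ⟨m, hm⟩ := hA
    obtain ⟨p, hp⟩ := hy0d
    obtain ⟨q, hq⟩ := hy1d
    obtain ⟨r, hr⟩ := hc
    exact ⟨m + 3*c0*p + 3*c1*q + r, by linear_combination hm + 3*c0*hp + 3*c1*hq + 3*hr⟩
  · have h0 : ((B + (d0 * y0 + d1 * y1 + d2) : ℤ) : ZMod 3) = 0 := by
      push_cast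
      rw [hy0c, hy1c]
      linear_combination hadj
    exact_mod_cast (ZMod.intCast_zmod_eq_zero_iff_dvd _ 3).mp h0

theorem stmt_13 (a b : Fin 9 → ℤ) (c d : Fin 3 → ℤ)
    (ha : ∀ i, ¬ (3 : ℤ) ∣ a i) (hc : ∀ j, ¬ (3 : ℤ) ∣ c j)
    (hd : ∀ l, ¬ (3 : ℤ) ∣ d l) :
    ∃ (x : Fin 9 → ℤ) (y : Fin 3 → ℤ),
      (∃ i, ¬ (3 : ℤ) ∣ x i) ∧
      ((9 : ℤ) ∣ (∑ i, a i * x i ^ 6) + 3 * (∑ j, c j * y j ^ 6)) ∧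
      ((3 : ℤ) ∣ (∑ i, b i * x i) + (∑ j, d j * y j)) := by
  have hu : ∀ j, ((c j : ZMod 3)) ≠ 0 := fun j h =>
    hc j (by exact_mod_cast (ZMod.intCast_zmod_eq_zero_iff_dvd _ 3).mp h)
  have hv : ∀ l, ((d l : ZMod 3)) ≠ 0 := fun l h =>
    hd l (by exact_mod_cast (ZMod.intCast_zmod_eq_zero_iff_dvd _ 3).mp h)
  set g : ℕ → ℤ := fun n => if h : n < 9 then a ⟨n, h⟩ else 0 with hg
  obtain ⟨j, k, hjk, hk9, hA⟩ := zerosum g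
  set x : Fin 9 → ℤ := fun i => if j ≤ (i : ℕ) ∧ (i : ℕ) < k then 1 else 0 with hx
  have hxA : ∑ i, a i * x i ^ 6 = ∑ i ∈ Finset.Ico j k, g i := by
    have h1 : ∀ i : Fin 9, a i * x i ^ 6 =
        (fun n : ℕ => if j ≤ n ∧ n < k then g n else 0) (i : ℕ) := by
      intro i
      simp only [hx, hg, i.isLt, dif_pos, Fin.eta]
      split <;> ring
    rw [Finset.sum_congr rfl (fun i _ => h1 i),
      Fin.sum_univ_eq_sum_range (fun n : ℕ => if j ≤ n ∧ n < k then g n else 0),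
      ← Finset.sum_filter]
    congr 1
    ext n
    simp only [Finset.mem_filter, Finset.mem_range, Finset.mem_Ico]
    omega
  have hxnz : ∃ i, ¬ (3 : ℤ) ∣ x i := by
    refine ⟨⟨j, by omega⟩, ?_⟩
    have : x ⟨j, by omega⟩ = 1 := by simp [hx]; omega
    rw [this]; norm_num
  set A : ℤ := ∑ i ∈ Finset.Ico j k, g i
  set B : ℤ := ∑ i, b i * x i with hB
  by_cases h01 : (c 0 : ZMod 3) + (c 1 : ZMod 3) = 0
  · obtain ⟨y0, y1, hsex, hlin⟩ := mainCase A B (c 0) (c 1) 0 (d 0) (d 1) 0 hA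
      (by
        have h0 : ((c 0 + c 1 + 0 : ℤ) : ZMod 3) = 0 := by push_cast; linear_combination h01
        exact_mod_cast (ZMod.intCast_zmod_eq_zero_iff_dvd _ 3).mp h0)
      (hv 0) (hv 1)
    refine ⟨x, ![y0, y1, 0], hxnz, ?_, ?_⟩
    · rw [hxA, Fin.sum_univ_three]
      simp only [Matrix.cons_val_zero, Matrix.cons_val_one, Matrix.head_cons,
        Matrix.cons_val_two, Matrix.tail_cons]
      have : A + 3 * (c 0 * y0 ^ 6 + c 1 * y1 ^ 6 + c 2 * 0 ^ 6)
          = A + 3 * (c 0 * y0 ^ 6 + c 1 * y1 ^ 6 + 0) := by ring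
      rw [this]; exact hsex
    · rw [Fin.sum_univ_three]
      simp only [Matrix.cons_val_zero, Matrix.cons_val_one, Matrix.head_cons,
        Matrix.cons_val_two, Matrix.tail_cons]
      have : B + (d 0 * y0 + d 1 * y1 + d 2 * 0)
          = B + (d 0 * y0 + d 1 * y1 + 0) := by ring
      rw [this]; exact hlin
  by_cases h02 : (c 0 : ZMod 3) + (c 2 : ZMod 3) = 0
  · obtain ⟨y0, y1, hsex, hlin⟩ := mainCase A B (c 0) (c 2) 0 (d 0) (d 2) 0 hA
      (by
        have h0 : ((c 0 + c 2 + 0 : ℤ) : ZMod 3) = 0 := by push_cast; linear_combination h02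
        exact_mod_cast (ZMod.intCast_zmod_eq_zero_iff_dvd _ 3).mp h0)
      (hv 0) (hv 2)
    refine ⟨x, ![y0, 0, y1], hxnz, ?_, ?_⟩
    · rw [hxA, Fin.sum_univ_three]
      simp only [Matrix.cons_val_zero, Matrix.cons_val_one, Matrix.head_cons,
        Matrix.cons_val_two, Matrix.tail_cons]
      have : A + 3 * (c 0 * y0 ^ 6 + c 1 * 0 ^ 6 + c 2 * y1 ^ 6)
          = A + 3 * (c 0 * y0 ^ 6 + c 2 * y1 ^ 6 + 0) := by ring
      rw [this]; exact hsex
    · rw [Fin.sum_univ_three]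
      simp only [Matrix.cons_val_zero, Matrix.cons_val_one, Matrix.head_cons,
        Matrix.cons_val_two, Matrix.tail_cons]
      have : B + (d 0 * y0 + d 1 * 0 + d 2 * y1)
          = B + (d 0 * y0 + d 2 * y1 + 0) := by ring
      rw [this]; exact hlin
  · by_cases h12 : (c 1 : ZMod 3) + (c 2 : ZMod 3) = 0
    · obtain ⟨y0, y1, hsex, hlin⟩ := mainCase A B (c 1) (c 2) 0 (d 1) (d 2) 0 hA
        (by
          have h0 : ((c 1 + c 2 + 0 : ℤ) : ZMod 3) = 0 := by push_cast; linear_combination h12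
          exact_mod_cast (ZMod.intCast_zmod_eq_zero_iff_dvd _ 3).mp h0)
        (hv 1) (hv 2)
      refine ⟨x, ![0, y0, y1], hxnz, ?_, ?_⟩
      · rw [hxA, Fin.sum_univ_three]
        simp only [Matrix.cons_val_zero, Matrix.cons_val_one, Matrix.head_cons,
          Matrix.cons_val_two, Matrix.tail_cons]
        have : A + 3 * (c 0 * 0 ^ 6 + c 1 * y0 ^ 6 + c 2 * y1 ^ 6)
            = A + 3 * (c 1 * y0 ^ 6 + c 2 * y1 ^ 6 + 0) := by ring
        rw [this]; exact hsex
      · rw [Fin.sum_univ_three]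
        simp only [Matrix.cons_val_zero, Matrix.cons_val_one, Matrix.head_cons,
          Matrix.cons_val_two, Matrix.tail_cons]
        have : B + (d 0 * 0 + d 1 * y0 + d 2 * y1)
            = B + (d 1 * y0 + d 2 * y1 + 0) := by ring
        rw [this]; exact hlin
    · -- all three c's congruent mod 3
      have e1 : (c 0 : ZMod 3) = (c 1 : ZMod 3) := pair3 _ _ (hu 0) (hu 1) h01
      have e2 : (c 0 : ZMod 3) = (c 2 : ZMod 3) := pair3 _ _ (hu 0) (hu 2) h02
      have h3 : ∀ z : ZMod 3, z + z + z = 0 := by decide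
      obtain ⟨y0, y1, hsex, hlin⟩ := mainCase A B (c 0) (c 1) (c 2) (d 0) (d 1) (d 2) hA
        (by
          have h0 : ((c 0 + c 1 + c 2 : ℤ) : ZMod 3) = 0 := by
            push_cast
            rw [← e1, ← e2]
            exact h3 _
          exact_mod_cast (ZMod.intCast_zmod_eq_zero_iff_dvd _ 3).mp h0)
        (hv 0) (hv 1)
      refine ⟨x, ![y0, y1, 1], hxnz, ?_, ?_⟩
      · rw [hxA, Fin.sum_univ_three]
        simp only [Matrix.cons_val_zero, Matrix.cons_val_one, Matrix.head_cons,
          Matrix.cons_val_two, Matrix.tail_cons]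
        have : A + 3 * (c 0 * y0 ^ 6 + c 1 * y1 ^ 6 + c 2 * 1 ^ 6)
            = A + 3 * (c 0 * y0 ^ 6 + c 1 * y1 ^ 6 + c 2) := by ring
        rw [this]; exact hsex
      · rw [Fin.sum_univ_three]
        simp only [Matrix.cons_val_zero, Matrix.cons_val_one, Matrix.head_cons,
          Matrix.cons_val_two, Matrix.tail_cons]
        have : B + (d 0 * y0 + d 1 * y1 + d 2 * 1)
            = B + (d 0 * y0 + d 1 * y1 + d 2) := by ring
        rw [this]; exact hlin
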